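/- Let 0 < β < γ ≤ 1, θ > 0, A > 0, δ = γ/β > 1, and Φ(t,s) = exp( -θA(1-s)^{γ-β}(1 - B(t,s)^{-(δ-1)})/(δ-1) ) with B(t,s) = 1 + t(1-s)^β/A. With normalization z = z(t) = (A/t)^{1/γ}, for every λ > 0, lim_{t→∞} Φ(t, e^{-λz}) = 1. -/

import Mathlib

open Real Filter

theorem degenerate_limit_beta_lt_gamma_gamma_norm
    (β γ θ A δ : ℝ) (hβ : 0 < β) (hβγ : β < γ) (hγ1 : γ ≤ 1)
    (hθ : 0 < θ) (hA : 0 < A) (hδ : δ = γ / β)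
    (B Φ : ℝ → ℝ → ℝ)
    (hB : ∀ t s, B t s = 1 + t * (1 - s) ^ β / A)
    (hΦ : ∀ t s, Φ t s = Real.exp (-(θ * A) * (1 - s) ^ (γ - β) * ((1 - B t s ^ (-(δ - 1))) / (δ - 1)))) :
    ∀ lam : ℝ, 0 < lam →
      Tendsto (fun t : ℝ => Φ t (Real.exp (-lam * (A / t) ^ (1 / γ))))
        atTop (nhds 1) := by
  intro lam hlam
  have hγ : 0 < γ := hβ.trans hβγ
  have hδ1 : 1 < δ := by
    rw [hδ]; exact (one_lt_div hβ).mpr hβγ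
  have hδ0 : 0 < δ - 1 := by linarith
  set s : ℝ → ℝ := fun t => Real.exp (-lam * (A / t) ^ (1 / γ)) with hs
  have hz : Tendsto (fun t : ℝ => (A / t) ^ (1 / γ)) atTop (nhds 0) := by
    have h1 : Tendsto (fun t : ℝ => A / t) atTop (nhds 0) :=
      tendsto_const_nhds.div_atTop tendsto_id
    have h2 : ContinuousAt (fun x : ℝ => x ^ (1 / γ)) 0 :=
      Real.continuousAt_rpow_const 0 (1 / γ) (Or.inr (by positivity))
    have h0 : (0:ℝ) ^ (γ⁻¹) = 0 := Real.zero_rpow (by positivity)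
    have := h2.tendsto.comp h1
    simpa [Function.comp_def, h0, Real.rpow_natCast] using this
  have hone : Tendsto (fun t : ℝ => 1 - s t) atTop (nhds 0) := by
    have h1 : Tendsto (fun t : ℝ => Real.exp (-lam * (A / t) ^ (1 / γ))) atTop (nhds 1) := by
      have := (Real.continuous_exp.tendsto (-lam * 0)).comp (hz.const_mul (-lam))
      simpa [Function.comp_def] using this
    have h2 : Tendsto (fun t : ℝ => (1:ℝ) - Real.exp (-lam * (A / t) ^ (1 / γ))) atTop (nhds (1 - 1)) :=
      Tendsto.sub tendsto_const_nhds h1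
    simpa [hs, neg_mul] using h2
  have hpow : Tendsto (fun t : ℝ => (1 - s t) ^ (γ - β)) atTop (nhds 0) := by
    have h2 : ContinuousAt (fun x : ℝ => x ^ (γ - β)) 0 :=
      Real.continuousAt_rpow_const 0 (γ - β) (Or.inr (by linarith))
    have h0 : (0:ℝ) ^ (γ - β) = 0 := Real.zero_rpow (ne_of_gt (by linarith))
    have := h2.tendsto.comp hone
    simpa [Function.comp_def, h0, Real.rpow_natCast] using this
  set g : ℝ → ℝ := fun t =>
    -(θ * A) * (1 - s t) ^ (γ - β) * ((1 - B t (s t) ^ (-(δ - 1))) / (δ - 1)) with hg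
  have key : ∀ t : ℝ, 0 < t →
      -(θ * A / (δ - 1)) * (1 - s t) ^ (γ - β) ≤ g t ∧ g t ≤ 0 := by
    intro t ht
    have hzp : 0 < (A / t) ^ (1 / γ) := Real.rpow_pos_of_pos (div_pos hA ht) _
    have hs1 : s t < 1 := by
      have hneg : -lam * (A / t) ^ (1 / γ) < 0 := mul_neg_of_neg_of_pos (by linarith) hzp
      exact Real.exp_lt_one_iff.mpr hneg
    have hX : 0 ≤ (1 - s t) ^ (γ - β) := Real.rpow_nonneg (by linarith) _
    have hB1 : 1 ≤ B t (s t) := by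
      rw [hB]
      have h0 : 0 ≤ (1 - s t) ^ β := Real.rpow_nonneg (by linarith) β
      have : 0 ≤ t * (1 - s t) ^ β / A := by positivity
      linarith
    have hBr0 : 0 ≤ B t (s t) ^ (-(δ - 1)) := Real.rpow_nonneg (by linarith) _
    have hBr1 : B t (s t) ^ (-(δ - 1)) ≤ 1 :=
      Real.rpow_le_one_of_one_le_of_nonpos hB1 (by linarith)
    have hY0 : 0 ≤ (1 - B t (s t) ^ (-(δ - 1))) / (δ - 1) := by
      apply div_nonneg <;> linarith
    have hY1 : (1 - B t (s t) ^ (-(δ - 1))) / (δ - 1) ≤ 1 / (δ - 1) := by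
      gcongr; linarith
    have hcoef : 0 ≤ θ * A * (1 - s t) ^ (γ - β) :=
      mul_nonneg (mul_nonneg hθ.le hA.le) hX
    have h1 := mul_le_mul_of_nonneg_left hY1 hcoef
    have h2 := mul_nonneg hcoef hY0
    constructor
    · simp only [hg]
      calc -(θ * A / (δ - 1)) * (1 - s t) ^ (γ - β)
          = -(θ * A * (1 - s t) ^ (γ - β) * (1 / (δ - 1))) := by ring
        _ ≤ -(θ * A * (1 - s t) ^ (γ - β) * ((1 - B t (s t) ^ (-(δ - 1))) / (δ - 1))) :=
            neg_le_neg h1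
        _ = -(θ * A) * (1 - s t) ^ (γ - β) * ((1 - B t (s t) ^ (-(δ - 1))) / (δ - 1)) := by ring
    · simp only [hg]
      calc -(θ * A) * (1 - s t) ^ (γ - β) * ((1 - B t (s t) ^ (-(δ - 1))) / (δ - 1))
          = -(θ * A * (1 - s t) ^ (γ - β) * ((1 - B t (s t) ^ (-(δ - 1))) / (δ - 1))) := by ring
        _ ≤ 0 := neg_nonpos_of_nonneg h2
  have hgt : Tendsto g atTop (nhds 0) := by
    have hlow : Tendsto (fun t : ℝ => -(θ * A / (δ - 1)) * (1 - s t) ^ (γ - β)) atTop (nhds 0) := by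
      simpa using hpow.const_mul (-(θ * A / (δ - 1)))
    refine tendsto_of_tendsto_of_tendsto_of_le_of_le' hlow tendsto_const_nhds ?_ ?_
    · filter_upwards [eventually_gt_atTop (0:ℝ)] with t ht using (key t ht).1
    · filter_upwards [eventually_gt_atTop (0:ℝ)] with t ht using (key t ht).2
  have hfin := (Real.continuous_exp.tendsto 0).comp hgt
  rw [Real.exp_zero] at hfin
  refine hfin.congr fun t => ?_
  simp only [Function.comp, hΦ, hg, hs]
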